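/- Let X ⊆ ℂ be a continuum such that ℂ \ X has finitely many connected components, let h : ℂ̂ → ℂ̂ be a homeomorphism of the extended plane with h(∞) = ∞, and set Y = h(X) (viewed as a subset of ℂ). Then the pseudo-fibers and fibers of Y are the images under h of those of X: for every x ∈ X, the pseudo-fiber of Y at h(x) equals h(E_x) and the fiber of Y at h(x) equals h(F_x). -/

import Mathlib

open Set Topology OnePoint

noncomputable section

/-- The set of connected components of a subset `S`. -/
def comps {α : Type*} [TopologicalSpace α] (S : Set α) : Set (Set α) :=
  {C | ∃ z ∈ S, C = connectedComponentIn S z}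

/-- A simple closed curve in the extended plane: the image of an injective
continuous map from the unit circle. -/
def IsSimpleClosedCurve (γ : Set (OnePoint ℂ)) : Prop :=
  ∃ f : (Metric.sphere (0 : ℂ) 1) → OnePoint ℂ,
    Continuous f ∧ Function.Injective f ∧ γ = Set.range f

/-- A subset of `ℂ` viewed inside the extended plane. -/
def emb (X : Set ℂ) : Set (OnePoint ℂ) :=
  (fun z : ℂ => (z : OnePoint ℂ)) '' X

/-- A good cut of `X`. -/
def IsGoodCut (X : Set ℂ) (γ : Set (OnePoint ℂ)) : Prop :=
  IsSimpleClosedCurve γ ∧ (γ ∩ emb (frontier X)).Nonempty ∧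
    (γ ∩ emb (frontier X)).Finite ∧ (γ \ emb X).Nonempty

/-- `x` and `y` lie in distinct connected components of `ℂ \ γ`. -/
def SeparatedBy (γ : Set (OnePoint ℂ)) (x y : ℂ) : Prop :=
  x ∈ {z : ℂ | (z : OnePoint ℂ) ∉ γ} ∧ y ∈ {z : ℂ | (z : OnePoint ℂ) ∉ γ} ∧
    connectedComponentIn {z : ℂ | (z : OnePoint ℂ) ∉ γ} x ≠
      connectedComponentIn {z : ℂ | (z : OnePoint ℂ) ∉ γ} y

/-- The pseudo-fiber `E_x`. -/
def pseudoFiber (X : Set ℂ) (x : ℂ) : Set ℂ :=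
  {y | y ∈ X ∧ ¬ ∃ γ : Set (OnePoint ℂ), IsGoodCut X γ ∧ SeparatedBy γ x y}

/-- The fiber `F_x`. -/
def fiber (X : Set ℂ) (x : ℂ) : Set ℂ :=
  connectedComponentIn (pseudoFiber X x) x

/-! ### Auxiliary lemmas -/

lemma Homeomorph.symm_image_image' {α β : Type*} [TopologicalSpace α] [TopologicalSpace β] (e : α ≃ₜ β) (s : Set α) :
    e.symm '' (e '' s) = s := e.toEquiv.symm_image_image s

lemma Homeomorph.image_symm_image' {α β : Type*} [TopologicalSpace α] [TopologicalSpace β] (e : α ≃ₜ β) (s : Set β) :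
    e '' (e.symm '' s) = s := e.toEquiv.image_symm_image s

lemma homeo_image_connectedComponentIn {α β : Type*} [TopologicalSpace α] [TopologicalSpace β]
    (e : α ≃ₜ β) (s : Set α) (x : α) :
    e '' connectedComponentIn s x = connectedComponentIn (e '' s) (e x) := by
  by_cases hx : x ∈ s
  · apply subset_antisymm (e.continuous.image_connectedComponentIn_subset hx)
    have h2 := e.symm.continuous.image_connectedComponentIn_subset
      (s := e '' s) (a := e x) (mem_image_of_mem _ hx)
    rw [e.symm_image_image' s, e.symm_apply_apply] at h2
    calc connectedComponentIn (e '' s) (e x)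
        = e '' (e.symm '' connectedComponentIn (e '' s) (e x)) := by
          rw [e.image_symm_image']
      _ ⊆ e '' connectedComponentIn s x := image_mono h2
  · rw [connectedComponentIn_eq_empty hx, connectedComponentIn_eq_empty, image_empty]
    simp only [mem_image, not_exists, not_and]
    intro w hw hew
    exact hx (by rwa [e.injective hew] at hw)

section Transfer

variable (h : OnePoint ℂ ≃ₜ OnePoint ℂ) (g : ℂ ≃ₜ ℂ)
  (hg : ∀ z : ℂ, h (z : OnePoint ℂ) = ((g z : ℂ) : OnePoint ℂ))

include hg

lemma hg_symm : ∀ z : ℂ, h.symm (z : OnePoint ℂ) = ((g.symm z : ℂ) : OnePoint ℂ) := by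
  intro z
  apply h.injective
  rw [h.apply_symm_apply, hg, g.apply_symm_apply]

lemma emb_image (S : Set ℂ) : emb (g '' S) = h '' emb S := by
  unfold emb
  rw [← image_comp, ← image_comp]
  exact image_congr fun z _ => (hg z).symm

lemma notin_set_eq (γ : Set (OnePoint ℂ)) :
    {w : ℂ | (w : OnePoint ℂ) ∉ h.symm '' γ} = g ⁻¹' {z : ℂ | (z : OnePoint ℂ) ∉ γ} := by
  ext w
  simp only [mem_setOf_eq, mem_preimage, Homeomorph.image_symm, mem_preimage, hg w]

lemma sep_pull {γ : Set (OnePoint ℂ)} {x y : ℂ} (hs : SeparatedBy γ (g x) (g y)) :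
    SeparatedBy (h.symm '' γ) x y := by
  obtain ⟨hx, hy, hne⟩ := hs
  have hset := notin_set_eq h g hg γ
  have himg : g '' {w : ℂ | (w : OnePoint ℂ) ∉ h.symm '' γ} = {z : ℂ | (z : OnePoint ℂ) ∉ γ} := by
    rw [hset, g.image_preimage]
  refine ⟨by rw [hset]; exact hx, by rw [hset]; exact hy, fun hcc => hne ?_⟩
  have h1 := homeo_image_connectedComponentIn g {w : ℂ | (w : OnePoint ℂ) ∉ h.symm '' γ} x
  have h2 := homeo_image_connectedComponentIn g {w : ℂ | (w : OnePoint ℂ) ∉ h.symm '' γ} y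
  rw [himg] at h1 h2
  rw [← h1, ← h2, hcc]

lemma goodcut_pull {X : Set ℂ} {γ : Set (OnePoint ℂ)} (hc : IsGoodCut (g '' X) γ) :
    IsGoodCut X (h.symm '' γ) := by
  obtain ⟨⟨f, hfc, hfi, hfr⟩, hne, hfin, hdiff⟩ := hc
  have hfront : emb (frontier (g '' X)) = h '' emb (frontier X) := by
    rw [← g.image_frontier, emb_image h g hg]
  have hint : h.symm '' γ ∩ emb (frontier X) = h.symm '' (γ ∩ emb (frontier (g '' X))) := by
    rw [image_inter h.symm.injective, hfront, h.symm_image_image']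
  have hdif : h.symm '' γ \ emb X = h.symm '' (γ \ emb (g '' X)) := by
    rw [image_diff h.symm.injective, emb_image h g hg, h.symm_image_image']
  refine ⟨⟨h.symm ∘ f, h.symm.continuous.comp hfc, h.symm.injective.comp hfi, ?_⟩, ?_, ?_, ?_⟩
  · rw [hfr, range_comp]
  · rw [hint]; exact hne.image _
  · rw [hint]; exact (hfin.image _)
  · rw [hdif]; exact hdiff.image _

lemma pf_subset (X : Set ℂ) (x : ℂ) :
    g '' pseudoFiber X x ⊆ pseudoFiber (g '' X) (g x) := by
  rintro _ ⟨y, ⟨hyX, hnc⟩, rfl⟩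
  refine ⟨mem_image_of_mem g hyX, ?_⟩
  rintro ⟨γ, hcut, hsep⟩
  exact hnc ⟨h.symm '' γ, goodcut_pull h g hg hcut, sep_pull h g hg hsep⟩

lemma pf_eq (X : Set ℂ) (x : ℂ) :
    pseudoFiber (g '' X) (g x) = g '' pseudoFiber X x := by
  apply subset_antisymm _ (pf_subset h g hg X x)
  have h2 := pf_subset h.symm g.symm (hg_symm h g hg) (g '' X) (g x)
  rw [g.symm_image_image', g.symm_apply_apply] at h2
  calc pseudoFiber (g '' X) (g x)
      = g '' (g.symm '' pseudoFiber (g '' X) (g x)) := by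
        rw [g.image_symm_image']
    _ ⊆ g '' pseudoFiber X x := image_mono h2

lemma fiber_eq (X : Set ℂ) (x : ℂ) :
    fiber (g '' X) (g x) = g '' fiber X x := by
  unfold fiber
  rw [pf_eq h g hg X x, ← homeo_image_connectedComponentIn]

end Transfer

/-- the pseudo-fibers and fibers of `Y = h(X)` are the images
under `h` of those of `X`, for a homeomorphism `h` of the extended plane fixing
`∞`. -/
theorem stmt_10 (X : Set ℂ) (hcomp : IsCompact X) (hconn : IsConnected X)
    (hfin : (comps (Xᶜ : Set ℂ)).Finite)
    (h : OnePoint ℂ ≃ₜ OnePoint ℂ) (hinf : h ∞ = ∞)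
    (Y : Set ℂ) (hY : emb Y = h '' emb X)
    (x : ℂ) (hx : x ∈ X)
    (x' : ℂ) (hx' : h (x : OnePoint ℂ) = (x' : OnePoint ℂ)) :
    emb (pseudoFiber Y x') = h '' emb (pseudoFiber X x) ∧
      emb (fiber Y x') = h '' emb (fiber X x) := by
  -- h maps ℂ to ℂ
  have key : ∀ (e : OnePoint ℂ ≃ₜ OnePoint ℂ), e ∞ = ∞ → ∀ z : ℂ, ∃ w : ℂ,
      e (z : OnePoint ℂ) = (w : OnePoint ℂ) := by
    intro e he z
    cases hw : e (z : OnePoint ℂ) with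
    | infty => exact absurd (e.injective (hw.trans he.symm)) (coe_ne_infty z)
    | coe w => exact ⟨w, rfl⟩
  have hinf' : h.symm ∞ = ∞ := by
    apply h.injective
    rw [h.apply_symm_apply, hinf]
  let gf : ℂ → ℂ := fun z => Classical.choose (key h hinf z)
  have hgf : ∀ z : ℂ, h (z : OnePoint ℂ) = ((gf z : ℂ) : OnePoint ℂ) :=
    fun z => Classical.choose_spec (key h hinf z)
  let gi : ℂ → ℂ := fun z => Classical.choose (key h.symm hinf' z)
  have hgi : ∀ z : ℂ, h.symm (z : OnePoint ℂ) = ((gi z : ℂ) : OnePoint ℂ) :=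
    fun z => Classical.choose_spec (key h.symm hinf' z)
  have hli : Function.LeftInverse gi gf := by
    intro z
    apply coe_injective
    rw [← hgi (gf z), ← hgf z, h.symm_apply_apply]
  have hri : Function.RightInverse gi gf := by
    intro z
    apply coe_injective
    rw [← hgf (gi z), ← hgi z, h.apply_symm_apply]
  have hcont : ∀ (e : OnePoint ℂ ≃ₜ OnePoint ℂ) (gg : ℂ → ℂ),
      (∀ z : ℂ, e (z : OnePoint ℂ) = ((gg z : ℂ) : OnePoint ℂ)) → Continuous gg := by
    intro e gg hgg
    have heq : ((↑) : ℂ → OnePoint ℂ) ∘ gg = e ∘ ((↑) : ℂ → OnePoint ℂ) := by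
      funext z; exact (hgg z).symm
    refine isOpenEmbedding_coe.isInducing.continuous_iff.mpr ?_
    rw [heq]
    exact e.continuous.comp continuous_coe
  let g : ℂ ≃ₜ ℂ :=
    { toFun := gf, invFun := gi, left_inv := hli, right_inv := hri,
      continuous_toFun := hcont h gf hgf
      continuous_invFun := hcont h.symm gi hgi }
  have hg : ∀ z : ℂ, h (z : OnePoint ℂ) = ((g z : ℂ) : OnePoint ℂ) := hgf
  have hYX : Y = g '' X := by
    have : emb Y = emb (g '' X) := by rw [emb_image h g hg, hY]
    exact (image_injective.mpr coe_injective) this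
  have hx'g : x' = g x := by
    apply coe_injective
    rw [← hx', hg x]
  subst hYX hx'g
  exact ⟨by rw [pf_eq h g hg X x, emb_image h g hg],
    by rw [fiber_eq h g hg X x, emb_image h g hg]⟩

end
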